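/- Let M > 1, n ≥ 1 a natural number, and v ≥ 0 with (n−1)·M·v ≤ (M−1)·n. Define ψ(α) = P₂(v)α² + P₁(v)α + P₀(v) with P₂, P₁, P₀ as in the context. Then ψ(1) = P₂(v) + P₁(v) + P₀(v) = (M−1)(n−1)v·((−M⁴−6M²−2M+1)n + (−M⁴+6M²+2M+1)(n−1)v) ≤ 0. -/
import Mathlib


/-- The coefficient `P₂(v)` of the auxiliary quadratic `ψ`. -/
noncomputable def P2 (M n v : ℝ) : ℝ :=
  2 * M ^ 2 * (M ^ 2 - 1) * (n - 1) ^ 2 * v ^ 2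
    - 2 * (1 + 2 * M - 3 * M ^ 3 - M ^ 4 + M ^ 5) * (n - 1) * n * v
    + 2 * (M - 1) ^ 2 * (2 * M ^ 2 + M ^ 3 - 1) * n ^ 2

/-- The coefficient `P₁(v)` of the auxiliary quadratic `ψ`. -/
noncomputable def P1 (M n v : ℝ) : ℝ :=
  -(1 + M + 2 * M ^ 2 - 6 * M ^ 3 + M ^ 4 + M ^ 5) * (n - 1) ^ 2 * v ^ 2
    + (3 + 11 * M + 12 * M ^ 2 - 16 * M ^ 3 - 3 * M ^ 4 + M ^ 5) * (n - 1) * n * v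
    + 2 * (2 - 4 * M - 3 * M ^ 2 + 5 * M ^ 3 + M ^ 4 - M ^ 5) * n ^ 2

/-- The coefficient `P₀(v)` of the auxiliary quadratic `ψ`. -/
noncomputable def P0 (M n v : ℝ) : ℝ :=
  2 * (M ^ 4 + 2 * M ^ 3 - 4 * M ^ 2 - 2 * M - 1) * (n - 1) * n * v
    - 2 * (M ^ 4 + 2 * M ^ 3 - 2 * M ^ 2 - 2 * M + 1) * n ^ 2

/-- The auxiliary quadratic `ψ(α) = P₂(v)α² + P₁(v)α + P₀(v)`. -/
noncomputable def psi (M n v α : ℝ) : ℝ :=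
  P2 M n v * α ^ 2 + P1 M n v * α + P0 M n v

theorem stmt_9 (M : ℝ) (n : ℕ) (v : ℝ)
    (hM : 1 < M) (hn : 1 ≤ n) (hv : 0 ≤ v)
    (hbound : ((n : ℝ) - 1) * M * v ≤ (M - 1) * n) :
    psi M (n : ℝ) v 1 = P2 M (n : ℝ) v + P1 M (n : ℝ) v + P0 M (n : ℝ) v ∧
    P2 M (n : ℝ) v + P1 M (n : ℝ) v + P0 M (n : ℝ) v
        = (M - 1) * ((n : ℝ) - 1) * v
            * ((-M ^ 4 - 6 * M ^ 2 - 2 * M + 1) * (n : ℝ)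
                + (-M ^ 4 + 6 * M ^ 2 + 2 * M + 1) * ((n : ℝ) - 1) * v) ∧
    psi M (n : ℝ) v 1 ≤ 0 := by
  have hn1 : (1:ℝ) ≤ (n:ℝ) := by exact_mod_cast hn
  have hnv : 0 ≤ ((n:ℝ) - 1) * v := mul_nonneg (by linarith) hv
  have hfac : 0 ≤ (M - 1) * ((n:ℝ) - 1) * v :=
    mul_nonneg (mul_nonneg (by linarith) (by linarith)) hv
  refine ⟨by unfold psi; ring, by unfold P2 P1 P0; ring, ?_⟩
  have heq : psi M (n : ℝ) v 1
      = (M - 1) * ((n : ℝ) - 1) * v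
            * ((-M ^ 4 - 6 * M ^ 2 - 2 * M + 1) * (n : ℝ)
                + (-M ^ 4 + 6 * M ^ 2 + 2 * M + 1) * ((n : ℝ) - 1) * v) := by
    unfold psi P2 P1 P0; ring
  rw [heq]
  have hA : (-M ^ 4 - 6 * M ^ 2 - 2 * M + 1) * (n : ℝ)
      + (-M ^ 4 + 6 * M ^ 2 + 2 * M + 1) * ((n : ℝ) - 1) * v ≤ 0 := by
    have hM0 : (0:ℝ) < M := by linarith
    rcases le_or_gt (-M ^ 4 + 6 * M ^ 2 + 2 * M + 1) 0 with hB | hB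
    · have h1 : (-M ^ 4 + 6 * M ^ 2 + 2 * M + 1) * (((n:ℝ) - 1) * v) ≤ 0 :=
        mul_nonpos_of_nonpos_of_nonneg hB hnv
      nlinarith [hn1, sq_nonneg M, sq_nonneg (M^2 - 1), mul_pos hM0 hM0]
    · have hMG : M * ((-M ^ 4 - 6 * M ^ 2 - 2 * M + 1) * (n : ℝ)
          + (-M ^ 4 + 6 * M ^ 2 + 2 * M + 1) * ((n : ℝ) - 1) * v) ≤ 0 := by
        nlinarith [mul_le_mul_of_nonneg_left hbound hB.le,
          mul_pos (lt_of_lt_of_le one_pos hn1)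
            (show (0:ℝ) < 2*M^5 - M^4 + 6*M^2 + 1 by nlinarith [mul_pos hM0 hM0, pow_pos hM0 4])]
      nlinarith [hMG, hM0]
  exact mul_nonpos_of_nonneg_of_nonpos hfac hA
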